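/- Let (𝔽,d) be a Hilbert space and, under the polynomial-growth dictionary setup, let A^α(𝔽,Σ^π,β) be the set of f ∈ 𝔽 with ‖f‖ ≤ β and sup_{M≥1} M^α d(f, Σ^π_M) ≤ β, for α, β > 0. Then the encoding speed satisfies γ*(A^α(𝔽,Σ^π,β)) ≥ α. -/

import Mathlib

open scoped ENNReal BigOperators
open Filter

noncomputable section

/-- The approximation speed `γ*(C|Σ) = sup { γ ∈ ℝ : sup_{f∈C} d(f,Σ_M) = O(M^{−γ}) }`,
as an extended real (`⊥ = −∞` if the set is empty). -/
def approxSpeed {F : Type*} [PseudoMetricSpace F] (C : Set F) (S : ℕ → Set F) : EReal :=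
  sSup {x : EReal | ∃ γ : ℝ, x = (γ : EReal) ∧ ∃ c : ℝ, 0 < c ∧
    ∀ᶠ M : ℕ in atTop, ∀ f ∈ C, Metric.infDist f (S M) ≤ c * (M : ℝ) ^ (-γ)}

/-- The encoding speed `γ*(C) = sup { γ > 0 : log₂ N(C,d,ε) = O(ε^{−1/γ}) as ε → 0 }`
(with value `0` if the supremum is over an empty set), where `N(C,d,ε)` is the minimal
cardinality of a finite subset of `C` whose closed `ε`-balls cover `C`. -/
def encodingSpeed {F : Type*} [PseudoMetricSpace F] (C : Set F) : EReal :=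
  sSup ({(0 : EReal)} ∪ {x : EReal | ∃ γ : ℝ, 0 < γ ∧ x = (γ : EReal) ∧ ∃ c : ℝ, 0 < c ∧
    ∀ᶠ ε : ℝ in nhdsWithin 0 (Set.Ioi 0), ∃ X : Finset F, ↑X ⊆ C ∧
      (C ⊆ ⋃ y ∈ X, Metric.closedBall y ε) ∧
      (X.card : ℝ) ≤ 2 ^ (c * ε ^ (-(1 / γ)))})

/-- `Σ = (Σ_M)` is `γ`-encodable: for every `h > 0` there are `c₁, c₂ > 0` and, for each `M`,
a finite subset of `Σ_M` which is a `c₁ M^{−γ}`-covering of `Σ_M` and whose base-2 log of the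
cardinality is at most `c₂ M^{1+h}`. -/
def IsEncodable {F : Type*} [PseudoMetricSpace F] (S : ℕ → Set F) (γ : ℝ) : Prop :=
  ∀ h : ℝ, 0 < h → ∃ c₁ : ℝ, 0 < c₁ ∧ ∃ c₂ : ℝ, 0 < c₂ ∧ ∀ M : ℕ, 1 ≤ M →
    ∃ X : Finset F, ↑X ⊆ S M ∧
      (S M ⊆ ⋃ y ∈ X, Metric.closedBall y (c₁ * (M : ℝ) ^ (-γ))) ∧
      Real.logb 2 (X.card) ≤ c₂ * (M : ℝ) ^ ((1 : ℝ) + h)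

open MeasureTheory Metric

lemma sep_card_le {E : Type*} [NormedAddCommGroup E] [InnerProductSpace ℝ E]
    [FiniteDimensional ℝ E] {R ε : ℝ} (hR : 0 < R) (hε : 0 < ε)
    (Y : Finset E) (hYR : ↑Y ⊆ closedBall (0 : E) R)
    (hsep : ∀ x ∈ Y, ∀ z ∈ Y, x ≠ z → ε < dist x z) :
    (Y.card : ℝ) ≤ (2 * R / ε + 2) ^ (Module.finrank ℝ E) := by
  letI : MeasurableSpace E := borel E
  haveI : BorelSpace E := ⟨rfl⟩
  set n := Module.finrank ℝ E
  set μ : Measure E := volume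
  have hdisj : (Y : Set E).PairwiseDisjoint (fun y => ball y (ε / 2)) := by
    intro x hx z hz hxz
    exact ball_disjoint_ball (by linarith [hsep x hx z hz hxz])
  have hsub : ∀ y ∈ Y, ball y (ε / 2) ⊆ ball (0 : E) (R + ε) := by
    intro y hy a ha
    have hyR : dist y 0 ≤ R := mem_closedBall.1 (hYR hy)
    have := dist_triangle a y 0
    simp only [mem_ball] at ha ⊢
    linarith
  have hmeas : μ (⋃ y ∈ Y, ball y (ε / 2)) = ∑ y ∈ Y, μ (ball y (ε / 2)) :=
    measure_biUnion_finset hdisj (fun y _ => measurableSet_ball)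
  have hball : ∀ y : E, μ (ball y (ε / 2)) = ENNReal.ofReal ((ε / 2) ^ n) * μ (ball 0 1) :=
    fun y => Measure.addHaar_ball_of_pos μ y (by linarith)
  have hle : (Y.card : ℝ≥0∞) * (ENNReal.ofReal ((ε / 2) ^ n) * μ (ball 0 1))
      ≤ ENNReal.ofReal ((R + ε) ^ n) * μ (ball 0 1) := by
    calc (Y.card : ℝ≥0∞) * (ENNReal.ofReal ((ε / 2) ^ n) * μ (ball 0 1))
        = ∑ y ∈ Y, μ (ball y (ε / 2)) := by
          rw [Finset.sum_congr rfl (fun y _ => hball y), Finset.sum_const, nsmul_eq_mul]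
      _ = μ (⋃ y ∈ Y, ball y (ε / 2)) := hmeas.symm
      _ ≤ μ (ball (0 : E) (R + ε)) := measure_mono (Set.iUnion₂_subset hsub)
      _ = ENNReal.ofReal ((R + ε) ^ n) * μ (ball 0 1) :=
          Measure.addHaar_ball_of_pos μ _ (by linarith)
  have hu0 : μ (ball (0 : E) 1) ≠ 0 := (measure_ball_pos μ 0 one_pos).ne'
  have hut : μ (ball (0 : E) 1) ≠ ⊤ := measure_ball_lt_top.ne
  have hle2 : (Y.card : ℝ≥0∞) * ENNReal.ofReal ((ε / 2) ^ n) ≤ ENNReal.ofReal ((R + ε) ^ n) := by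
    rw [← mul_assoc] at hle
    exact (ENNReal.mul_le_mul_iff_left hu0 hut).1 hle
  have hpow : (0 : ℝ) < (ε / 2) ^ n := pow_pos (by linarith) n
  have hcard : (Y.card : ℝ≥0∞) ≤ ENNReal.ofReal ((R + ε) ^ n / (ε / 2) ^ n) := by
    rw [ENNReal.ofReal_div_of_pos hpow, ENNReal.le_div_iff_mul_le
      (Or.inl (by simp only [ne_eq, ENNReal.ofReal_eq_zero, not_le]; exact hpow))
      (Or.inl ENNReal.ofReal_ne_top)]
    exact hle2
  have h3 : (Y.card : ℝ) ≤ (R + ε) ^ n / (ε / 2) ^ n := by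
    rw [← ENNReal.ofReal_natCast Y.card] at hcard
    exact (ENNReal.ofReal_le_ofReal_iff (by positivity)).1 hcard
  calc (Y.card : ℝ) ≤ (R + ε) ^ n / (ε / 2) ^ n := h3
    _ = ((R + ε) / (ε / 2)) ^ n := (div_pow _ _ _).symm
    _ = (2 * R / ε + 2) ^ n := by congr 1; field_simp

lemma exists_net_findim {E : Type*} [NormedAddCommGroup E] [InnerProductSpace ℝ E]
    [FiniteDimensional ℝ E] {R ε : ℝ} (hR : 0 < R) (hε : 0 < ε)
    (A : Set E) (hA : A ⊆ closedBall (0 : E) R) :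
    ∃ X : Finset E, ↑X ⊆ A ∧ (A ⊆ ⋃ y ∈ X, closedBall y ε) ∧
      (X.card : ℝ) ≤ (2 * R / ε + 2) ^ (Module.finrank ℝ E) := by
  classical
  set n := Module.finrank ℝ E
  set bR : ℝ := (2 * R / ε + 2) ^ n with hbR
  set B : ℕ := ⌊bR⌋₊ with hB
  set P : ℕ → Prop := fun m => ∃ Y : Finset E, ↑Y ⊆ A ∧
    (∀ x ∈ Y, ∀ z ∈ Y, x ≠ z → ε < dist x z) ∧ Y.card = m with hP
  have hbound : ∀ m, P m → m ≤ B := by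
    rintro m ⟨Y, hYA, hsep, rfl⟩
    exact Nat.le_floor (sep_card_le hR hε Y (fun y hy => hA (hYA hy)) hsep)
  have hP0 : P 0 := ⟨∅, by simp, by simp, rfl⟩
  set N := Nat.findGreatest P B with hN
  have hPN : P N := Nat.findGreatest_spec (Nat.zero_le B) hP0
  obtain ⟨Y, hYA, hsep, hYcard⟩ := hPN
  refine ⟨Y, hYA, ?_, ?_⟩
  · intro a ha
    by_contra hcov
    simp only [Set.mem_iUnion, mem_closedBall, not_exists] at hcov
    have haY : a ∉ Y := fun h => by
      have := hcov a h; simp at this; linarith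
    have key : ∀ z ∈ Y, ε < dist a z := fun z hz => lt_of_not_ge fun h => hcov z hz h
    have hsep' : ∀ x ∈ insert a Y, ∀ z ∈ insert a Y, x ≠ z → ε < dist x z := by
      intro x hx z hz hxz
      rcases Finset.mem_insert.1 hx with hxa | hx
      · rcases Finset.mem_insert.1 hz with hza | hz
        · exact absurd (hxa.trans hza.symm) hxz
        · rw [hxa]; exact key z hz
      · rcases Finset.mem_insert.1 hz with hza | hz
        · rw [hza, dist_comm]; exact key x hx
        · exact hsep x hx z hz hxz
    have hPN1 : P (N + 1) := ⟨insert a Y, by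
        intro x hx
        rcases Finset.mem_insert.1 (by exact_mod_cast hx) with rfl | hx
        exacts [ha, hYA hx], hsep', by rw [Finset.card_insert_of_notMem haY, hYcard]⟩
    exact Nat.findGreatest_is_greatest (Nat.lt_succ_self N) (hbound _ hPN1) hPN1
  · rw [hYcard]
    calc (N : ℝ) ≤ (B : ℝ) := by exact_mod_cast Nat.findGreatest_le B
      _ ≤ bR := Nat.floor_le (by positivity)

lemma exists_net_submodule {F : Type*} [NormedAddCommGroup F] [InnerProductSpace ℝ F]
    (V : Submodule ℝ F) [FiniteDimensional ℝ V] {R ε : ℝ} (hR : 0 < R) (hε : 0 < ε)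
    (A : Set F) (hAV : A ⊆ (V : Set F)) (hA : A ⊆ closedBall (0 : F) R) :
    ∃ X : Finset F, ↑X ⊆ A ∧ (A ⊆ ⋃ y ∈ X, closedBall y ε) ∧
      (X.card : ℝ) ≤ (2 * R / ε + 2) ^ (Module.finrank ℝ V) := by
  classical
  set A' : Set V := {x : V | (x : F) ∈ A} with hA'
  have hA'_ball : A' ⊆ closedBall (0 : V) R := by
    intro x hx
    have : dist (x : F) (0 : F) ≤ R := mem_closedBall.1 (hA hx)
    simpa [mem_closedBall, Subtype.dist_eq] using this
  obtain ⟨X', hX'A, hX'cov, hX'card⟩ := exists_net_findim hR hε A' hA'_ball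
  refine ⟨X'.map ⟨Subtype.val, Subtype.val_injective⟩, ?_, ?_, ?_⟩
  · intro x hx
    simp only [Finset.coe_map, Set.mem_image, Function.Embedding.coeFn_mk] at hx
    obtain ⟨y, hy, rfl⟩ := hx
    exact hX'A hy
  · intro a ha
    have : (⟨a, hAV ha⟩ : V) ∈ A' := ha
    obtain ⟨y, hy⟩ := Set.mem_iUnion₂.1 (hX'cov this)
    refine Set.mem_iUnion₂.2 ⟨(y : F), ?_, ?_⟩
    · simp only [Finset.mem_coe, Finset.mem_map, Function.Embedding.coeFn_mk]
      exact ⟨y, hy.1, rfl⟩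
    · have := mem_closedBall.1 hy.2
      rw [Subtype.dist_eq] at this
      exact mem_closedBall.2 this
  · rwa [Finset.card_map]

lemma cover_S {F : Type*} [NormedAddCommGroup F] [InnerProductSpace ℝ F]
    (φ : ℕ → F) (p M : ℕ) {R ε : ℝ} (hR : 0 < R) (hε : 0 < ε) :
    ∃ X : Finset F,
      ↑X ⊆ {g : F | ∃ I : Finset ℕ, I ⊆ Finset.range p ∧ I.card ≤ M ∧
          ∃ co : ℕ → ℝ, g = ∑ i ∈ I, co i • φ i} ∩ closedBall (0 : F) R ∧
      ({g : F | ∃ I : Finset ℕ, I ⊆ Finset.range p ∧ I.card ≤ M ∧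
          ∃ co : ℕ → ℝ, g = ∑ i ∈ I, co i • φ i} ∩ closedBall (0 : F) R
        ⊆ ⋃ y ∈ X, closedBall y ε) ∧
      (X.card : ℝ) ≤ (M + 1) * ((p + 1 : ℕ) : ℝ) ^ M * (2 * R / ε + 2) ^ M := by
  classical
  set S : Set F := {g : F | ∃ I : Finset ℕ, I ⊆ Finset.range p ∧ I.card ≤ M ∧
      ∃ co : ℕ → ℝ, g = ∑ i ∈ I, co i • φ i} with hS
  set A : Finset ℕ → Set F := fun I =>
    {g : F | ∃ co : ℕ → ℝ, g = ∑ i ∈ I, co i • φ i} ∩ closedBall (0 : F) R with hA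
  have hnet : ∀ I : Finset ℕ, ∃ X : Finset F, ↑X ⊆ A I ∧
      (A I ⊆ ⋃ y ∈ X, closedBall y ε) ∧
      (X.card : ℝ) ≤ (2 * R / ε + 2) ^ (Module.finrank ℝ
        (Submodule.span ℝ ((I.image φ : Finset F) : Set F))) := by
    intro I
    haveI : FiniteDimensional ℝ (Submodule.span ℝ ((I.image φ : Finset F) : Set F)) :=
      FiniteDimensional.span_of_finite ℝ (Finset.finite_toSet _)
    apply exists_net_submodule _ hR hε
    · rintro g ⟨⟨co, rfl⟩, -⟩
      refine Submodule.sum_mem _ fun i hi => Submodule.smul_mem _ _ ?_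
      exact Submodule.subset_span (by simp [Finset.mem_image]; exact ⟨i, hi, rfl⟩)
    · exact Set.inter_subset_right
  choose f hf1 hf2 hf3 using hnet
  set P : Finset (Finset ℕ) := (Finset.range p).powerset.filter (fun I => I.card ≤ M) with hPdef
  refine ⟨P.biUnion f, ?_, ?_, ?_⟩
  · intro x hx
    simp only [Finset.coe_biUnion, Set.mem_iUnion, Finset.mem_coe] at hx
    obtain ⟨I, hIP, hxI⟩ := hx
    have hI := Finset.mem_filter.1 hIP
    have hxA := hf1 I hxI
    obtain ⟨⟨co, rfl⟩, hball⟩ := hxA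
    exact ⟨⟨I, Finset.mem_powerset.1 hI.1, hI.2, co, rfl⟩, hball⟩
  · rintro g ⟨⟨I, hIr, hIc, co, rfl⟩, hball⟩
    have hIP : I ∈ P := Finset.mem_filter.2 ⟨Finset.mem_powerset.2 hIr, hIc⟩
    have hgA : (∑ i ∈ I, co i • φ i) ∈ A I := ⟨⟨co, rfl⟩, hball⟩
    obtain ⟨y, hy, hyb⟩ := Set.mem_iUnion₂.1 (hf2 I hgA)
    exact Set.mem_iUnion₂.2 ⟨y, Finset.mem_biUnion.2 ⟨I, hIP, hy⟩, hyb⟩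
  · have hbase : (1 : ℝ) ≤ 2 * R / ε + 2 := by
      have : 0 ≤ 2 * R / ε := by positivity
      linarith
    have hcard1 : ∀ I ∈ P, ((f I).card : ℝ) ≤ (2 * R / ε + 2) ^ M := by
      intro I hIP
      refine (hf3 I).trans (pow_le_pow_right₀ hbase ?_)
      calc Module.finrank ℝ (Submodule.span ℝ ((I.image φ : Finset F) : Set F))
          ≤ (I.image φ).card := by simpa [Set.finrank] using finrank_span_finset_le_card (I.image φ)
        _ ≤ I.card := Finset.card_image_le
        _ ≤ M := (Finset.mem_filter.1 hIP).2
    have hPcard : (P.card : ℝ) ≤ (M + 1) * ((p + 1 : ℕ) : ℝ) ^ M := by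
      have hsub : P ⊆ (Finset.range (M + 1)).biUnion
          (fun j => Finset.powersetCard j (Finset.range p)) := by
        intro I hIP
        have hI := Finset.mem_filter.1 hIP
        exact Finset.mem_biUnion.2 ⟨I.card, Finset.mem_range.2 (Nat.lt_succ_of_le hI.2),
          Finset.mem_powersetCard.2 ⟨Finset.mem_powerset.1 hI.1, rfl⟩⟩
      have : P.card ≤ (M + 1) * (p + 1) ^ M := by
        calc P.card ≤ _ := Finset.card_le_card hsub
          _ ≤ ∑ j ∈ Finset.range (M + 1), (Finset.powersetCard j (Finset.range p)).card :=
              Finset.card_biUnion_le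
          _ ≤ ∑ _j ∈ Finset.range (M + 1), (p + 1) ^ M := by
              refine Finset.sum_le_sum fun j hj => ?_
              rw [Finset.card_powersetCard, Finset.card_range]
              calc p.choose j ≤ p ^ j := Nat.choose_le_pow _ _
                _ ≤ (p + 1) ^ j := Nat.pow_le_pow_left (Nat.le_succ p) j
                _ ≤ (p + 1) ^ M := Nat.pow_le_pow_right (Nat.succ_le_succ (Nat.zero_le p))
                    (Nat.lt_succ_iff.1 (Finset.mem_range.1 hj))
          _ = (M + 1) * (p + 1) ^ M := by rw [Finset.sum_const, Finset.card_range, smul_eq_mul]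
      calc (P.card : ℝ) ≤ (((M + 1) * (p + 1) ^ M : ℕ) : ℝ) := by exact_mod_cast this
        _ = (M + 1) * ((p + 1 : ℕ) : ℝ) ^ M := by push_cast; ring
    calc ((P.biUnion f).card : ℝ) ≤ ((∑ I ∈ P, (f I).card : ℕ) : ℝ) := by
          exact_mod_cast Finset.card_biUnion_le
      _ = ∑ I ∈ P, ((f I).card : ℝ) := by push_cast; rfl
      _ ≤ ∑ _I ∈ P, (2 * R / ε + 2) ^ M := Finset.sum_le_sum hcard1
      _ = P.card * (2 * R / ε + 2) ^ M := by rw [Finset.sum_const, nsmul_eq_mul]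
      _ ≤ (M + 1) * ((p + 1 : ℕ) : ℝ) ^ M * (2 * R / ε + 2) ^ M := by
          refine mul_le_mul_of_nonneg_right hPcard (by positivity)

lemma cover_C {F : Type*} [NormedAddCommGroup F] [InnerProductSpace ℝ F]
    (φ : ℕ → F) (π : ℕ → ℕ) (α β : ℝ) (hα : 0 < α) (hβ : 0 < β)
    (M : ℕ) (hM : 1 ≤ M) :
    ∃ X : Finset F,
      ↑X ⊆ {f : F | ‖f‖ ≤ β ∧ ∀ N : ℕ, 1 ≤ N →
          (N : ℝ) ^ α * Metric.infDist f
            {g : F | ∃ I : Finset ℕ, I ⊆ Finset.range (π N) ∧ I.card ≤ N ∧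
              ∃ co : ℕ → ℝ, g = ∑ i ∈ I, co i • φ i} ≤ β} ∧
      ({f : F | ‖f‖ ≤ β ∧ ∀ N : ℕ, 1 ≤ N →
          (N : ℝ) ^ α * Metric.infDist f
            {g : F | ∃ I : Finset ℕ, I ⊆ Finset.range (π N) ∧ I.card ≤ N ∧
              ∃ co : ℕ → ℝ, g = ∑ i ∈ I, co i • φ i} ≤ β}
        ⊆ ⋃ y ∈ X, closedBall y (6 * β * (M : ℝ) ^ (-α))) ∧
      (X.card : ℝ) ≤ (M + 1) * ((π M + 1 : ℕ) : ℝ) ^ M * (6 * (M : ℝ) ^ α + 2) ^ M := by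
  classical
  set C : Set F := {f : F | ‖f‖ ≤ β ∧ ∀ N : ℕ, 1 ≤ N →
      (N : ℝ) ^ α * Metric.infDist f
        {g : F | ∃ I : Finset ℕ, I ⊆ Finset.range (π N) ∧ I.card ≤ N ∧
          ∃ co : ℕ → ℝ, g = ∑ i ∈ I, co i • φ i} ≤ β} with hC
  set S : Set F := {g : F | ∃ I : Finset ℕ, I ⊆ Finset.range (π M) ∧ I.card ≤ M ∧
      ∃ co : ℕ → ℝ, g = ∑ i ∈ I, co i • φ i} with hSdef
  have hM1 : (1 : ℝ) ≤ (M : ℝ) := by exact_mod_cast hM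
  have hMpos : (0 : ℝ) < (M : ℝ) := lt_of_lt_of_le one_pos hM1
  have hMα : (0 : ℝ) < (M : ℝ) ^ α := Real.rpow_pos_of_pos hMpos α
  have hMnegα : (0 : ℝ) < (M : ℝ) ^ (-α) := Real.rpow_pos_of_pos hMpos (-α)
  have hMnegα1 : (M : ℝ) ^ (-α) ≤ 1 :=
    Real.rpow_le_one_of_one_le_of_nonpos hM1 (neg_nonpos.2 hα.le)
  set r : ℝ := β * (M : ℝ) ^ (-α) with hr
  have hrpos : 0 < r := mul_pos hβ hMnegα
  have hrβ : r ≤ β := by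
    calc r ≤ β * 1 := mul_le_mul_of_nonneg_left hMnegα1 hβ.le
      _ = β := mul_one β
  obtain ⟨Xpre, hXpre1, hXpre2, hXpre3⟩ := cover_S φ (π M) M (R := 3 * β)
    (by linarith) hrpos
  -- S is nonempty
  have hSne : S.Nonempty := ⟨0, ∅, by simp, by simp [hM], fun _ => 0, by simp⟩
  -- every f in C is within 3r of Xpre
  have hclose : ∀ f ∈ C, ∃ y ∈ Xpre, dist f y < 3 * r := by
    intro f hf
    have hinf : Metric.infDist f S ≤ r := by
      have h1 := hf.2 M hM
      rw [← hSdef] at h1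
      have := (le_div_iff₀' hMα).2 h1
      rwa [div_eq_mul_inv, mul_comm β, ← Real.rpow_neg hMpos.le, mul_comm] at this
    have hinf2 : Metric.infDist f S < 2 * r := lt_of_le_of_lt hinf (by linarith)
    obtain ⟨g, hgS, hgd⟩ := (Metric.infDist_lt_iff hSne).1 hinf2
    have hgball : g ∈ closedBall (0 : F) (3 * β) := by
      rw [mem_closedBall, dist_zero_right]
      calc ‖g‖ ≤ ‖f‖ + dist f g := by
            rw [dist_eq_norm]
            calc ‖g‖ = ‖f - (f - g)‖ := by rw [sub_sub_cancel]
              _ ≤ ‖f‖ + ‖f - g‖ := norm_sub_le _ _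
        _ ≤ β + 2 * r := add_le_add hf.1 hgd.le
        _ ≤ 3 * β := by linarith
    obtain ⟨y, hy, hyd⟩ := Set.mem_iUnion₂.1 (hXpre2 ⟨hgS, hgball⟩)
    refine ⟨y, hy, ?_⟩
    calc dist f y ≤ dist f g + dist g y := dist_triangle _ _ _
      _ < 2 * r + r := add_lt_add_of_lt_of_le hgd (mem_closedBall.1 hyd)
      _ = 3 * r := by ring
  -- reselect points inside C
  set pick : F → F := fun y =>
    if h : (C ∩ closedBall y (3 * r)).Nonempty then h.some else 0 with hpick
  set X : Finset F :=
    (Xpre.filter (fun y => (C ∩ closedBall y (3 * r)).Nonempty)).image pick with hX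
  have hpick_mem : ∀ y, (C ∩ closedBall y (3 * r)).Nonempty →
      pick y ∈ C ∩ closedBall y (3 * r) := by
    intro y h
    simp only [hpick, dif_pos h]
    exact h.some_mem
  refine ⟨X, ?_, ?_, ?_⟩
  · intro x hx
    simp only [hX, Finset.coe_image, Set.mem_image, Finset.coe_filter, Set.mem_setOf_eq,
      Finset.mem_coe] at hx
    obtain ⟨y, ⟨-, hne⟩, rfl⟩ := hx
    exact (hpick_mem y hne).1
  · intro f hf
    obtain ⟨y, hy, hyd⟩ := hclose f hf
    have hne : (C ∩ closedBall y (3 * r)).Nonempty := ⟨f, hf, mem_closedBall.2 hyd.le⟩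
    refine Set.mem_iUnion₂.2 ⟨pick y, ?_, ?_⟩
    · simp only [hX, Finset.mem_coe, Finset.mem_image]
      exact ⟨y, Finset.mem_filter.2 ⟨hy, hne⟩, rfl⟩
    · have hc := (hpick_mem y hne).2
      rw [mem_closedBall] at hc ⊢
      have : 6 * β * (M : ℝ) ^ (-α) = 3 * r + 3 * r := by rw [hr]; ring
      rw [this]
      calc dist f (pick y) ≤ dist f y + dist y (pick y) := dist_triangle _ _ _
        _ ≤ 3 * r + 3 * r := add_le_add hyd.le (by rwa [dist_comm] at hc)
  · have hcard : (X.card : ℝ) ≤ (Xpre.card : ℝ) := by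
      have := (Finset.card_image_le (s := Xpre.filter
        (fun y => (C ∩ closedBall y (3 * r)).Nonempty)) (f := pick)).trans
        (Finset.card_filter_le _ _)
      exact_mod_cast this
    refine hcard.trans (hXpre3.trans ?_)
    have : 2 * (3 * β) / r + 2 = 6 * (M : ℝ) ^ α + 2 := by
      rw [hr]
      rw [Real.rpow_neg hMpos.le]
      field_simp
      ring
    rw [this]

set_option maxHeartbeats 1000000 in
theorem main_thm {F : Type*} [NormedAddCommGroup F]
    [InnerProductSpace ℝ F] [CompleteSpace F]
    (φ : ℕ → F) (π : ℕ → ℕ)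
    (hπ : ∃ Cp : ℝ, 0 < Cp ∧ ∃ k : ℕ, ∀ M : ℕ, 1 ≤ M → (π M : ℝ) ≤ Cp * (M : ℝ) ^ k)
    (α β : ℝ) (hα : 0 < α) (hβ : 0 < β) :
    ∀ γ : ℝ, 0 < γ → γ < α → ∃ c : ℝ, 0 < c ∧
      ∀ᶠ ε : ℝ in nhdsWithin 0 (Set.Ioi 0), ∃ X : Finset F,
        ↑X ⊆ {f : F | ‖f‖ ≤ β ∧ ∀ M : ℕ, 1 ≤ M →
          (M : ℝ) ^ α * Metric.infDist f
            {g : F | ∃ I : Finset ℕ, I ⊆ Finset.range (π M) ∧ I.card ≤ M ∧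
              ∃ co : ℕ → ℝ, g = ∑ i ∈ I, co i • φ i} ≤ β} ∧
        ({f : F | ‖f‖ ≤ β ∧ ∀ M : ℕ, 1 ≤ M →
          (M : ℝ) ^ α * Metric.infDist f
            {g : F | ∃ I : Finset ℕ, I ⊆ Finset.range (π M) ∧ I.card ≤ M ∧
              ∃ co : ℕ → ℝ, g = ∑ i ∈ I, co i • φ i} ≤ β}
          ⊆ ⋃ y ∈ X, closedBall y ε) ∧
        (X.card : ℝ) ≤ 2 ^ (c * ε ^ (-(1 / γ))) := by
  classical
  obtain ⟨Cp, hCp, k, hπk⟩ := hπ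
  intro γ hγ hγα
  set h : ℝ := α / γ - 1 with hh_def
  have hh : 0 < h := by
    have : 1 < α / γ := (one_lt_div hγ).2 hγα
    simp [hh_def]; linarith
  set a : ℕ := ⌈α⌉₊ with ha_def
  have haα : α ≤ (a : ℝ) := Nat.le_ceil α
  have ha1 : 1 ≤ a := Nat.one_le_iff_ne_zero.2 (by
    simp only [ha_def, ne_eq, Nat.ceil_eq_zero, not_le]; exact hα)
  set E : ℝ := 16 * (Cp + 1) with hE_def
  have hE1 : (1 : ℝ) < E := by simp [hE_def]; nlinarith
  set b : ℕ := k + a with hb_def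
  set K : ℝ := Real.logb 2 E + b / (h * Real.log 2) with hK_def
  have hlog2 : (0 : ℝ) < Real.log 2 := Real.log_pos one_lt_two
  have hK : 0 < K := by
    have h1 : 0 < Real.logb 2 E := Real.logb_pos one_lt_two hE1
    have h2 : (0 : ℝ) ≤ b / (h * Real.log 2) := by positivity
    simp [hK_def]; linarith
  have hexp : (1 / α) * (1 + h) = 1 / γ := by
    have h1 : 1 + h = α / γ := by rw [hh_def]; ring
    rw [h1]
    field_simp
  set c : ℝ := K * 2 ^ ((1 : ℝ) + h) * (6 * β) ^ (1 / γ) with hc_def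
  have hc : 0 < c := by
    have h2 : (0 : ℝ) < 2 ^ ((1 : ℝ) + h) := Real.rpow_pos_of_pos two_pos _
    have h3 : (0 : ℝ) < (6 * β) ^ (1 / γ) := Real.rpow_pos_of_pos (by linarith) _
    positivity
  refine ⟨c, hc, ?_⟩
  have hmem : Set.Ioo (0 : ℝ) (6 * β) ∈ nhdsWithin 0 (Set.Ioi 0) :=
    Ioo_mem_nhdsGT_of_mem ⟨le_refl 0, by linarith⟩
  filter_upwards [hmem] with ε hε
  obtain ⟨hε0, hεβ⟩ := hε
  set x : ℝ := (6 * β / ε) ^ (1 / α) with hx_def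
  have hqpos : (0 : ℝ) < 6 * β / ε := by positivity
  have hq1 : (1 : ℝ) ≤ 6 * β / ε := (one_le_div hε0).2 (by linarith)
  have hx1 : (1 : ℝ) ≤ x := by
    calc (1:ℝ) = 1 ^ (1/α) := (Real.one_rpow _).symm
      _ ≤ (6 * β / ε) ^ (1/α) := Real.rpow_le_rpow zero_le_one hq1 (by positivity)
  set M : ℕ := ⌈x⌉₊ with hM_def
  have hM1 : 1 ≤ M := Nat.one_le_iff_ne_zero.2 (by
    simp only [hM_def, ne_eq, Nat.ceil_eq_zero, not_le]; linarith)
  set m : ℝ := (M : ℝ) with hm_def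
  have hm1 : (1 : ℝ) ≤ m := by rw [hm_def]; exact_mod_cast hM1
  have hm0 : (0 : ℝ) < m := lt_of_lt_of_le one_pos hm1
  have hxm : x ≤ m := Nat.le_ceil x
  obtain ⟨X, hX1, hX2, hX3⟩ := cover_C φ π α β hα hβ M hM1
  have hrad : 6 * β * m ^ (-α) ≤ ε := by
    have h1 : 6 * β / ε ≤ m ^ α := by
      calc 6 * β / ε = ((6 * β / ε) ^ (1 / α)) ^ α := by
            rw [← Real.rpow_mul hqpos.le, one_div_mul_cancel hα.ne', Real.rpow_one]
        _ ≤ m ^ α := Real.rpow_le_rpow (Real.rpow_nonneg hqpos.le _) hxm hα.le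
    have h2 : m ^ (-α) ≤ ε / (6 * β) := by
      rw [Real.rpow_neg hm0.le]
      have hmα : (0 : ℝ) < m ^ α := Real.rpow_pos_of_pos hm0 α
      rw [inv_le_comm₀ hmα (by positivity)]
      rw [inv_div]
      exact h1
    calc 6 * β * m ^ (-α) ≤ 6 * β * (ε / (6 * β)) :=
          mul_le_mul_of_nonneg_left h2 (by linarith)
      _ = ε := by field_simp
  refine ⟨X, hX1, ?_, ?_⟩
  · exact hX2.trans (Set.iUnion₂_mono fun y _ => closedBall_subset_closedBall hrad)
  · -- cardinality bound
    have hmk1 : (1 : ℝ) ≤ m ^ k := one_le_pow₀ hm1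
    have hma : m ^ α ≤ m ^ a := by
      rw [← Real.rpow_natCast m a]
      exact Real.rpow_le_rpow_of_exponent_le hm1 haα
    have step2 : m + 1 ≤ 2 ^ M := by
      have h2 : M + 1 ≤ 2 ^ M := Nat.succ_le_of_lt (Nat.lt_two_pow_self (n := M))
      rw [hm_def]
      exact_mod_cast h2
    have step3 : ((π M + 1 : ℕ) : ℝ) ≤ (Cp + 1) * m ^ k := by
      push_cast
      have := hπk M hM1
      nlinarith
    have step4 : 6 * m ^ α + 2 ≤ 8 * m ^ a := by
      have h2 : (1 : ℝ) ≤ m ^ a := one_le_pow₀ hm1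
      nlinarith
    have hEm : (0 : ℝ) < E * m ^ b := by positivity
    have hstep : (X.card : ℝ) ≤ (E * m ^ b) ^ M := by
      have t1 : (X.card : ℝ) ≤ (m + 1) * ((π M + 1 : ℕ) : ℝ) ^ M * (6 * m ^ α + 2) ^ M := hX3
      have t2 : ((π M + 1 : ℕ) : ℝ) ^ M ≤ ((Cp + 1) * m ^ k) ^ M :=
        pow_le_pow_left₀ (by positivity) step3 M
      have t3 : (6 * m ^ α + 2) ^ M ≤ (8 * m ^ a) ^ M := by
        refine pow_le_pow_left₀ ?_ step4 M
        have : (0:ℝ) < m ^ α := Real.rpow_pos_of_pos hm0 α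
        positivity
      have t4 : (m + 1) * ((π M + 1 : ℕ) : ℝ) ^ M * (6 * m ^ α + 2) ^ M ≤
          2 ^ M * ((Cp + 1) * m ^ k) ^ M * (8 * m ^ a) ^ M := by
        have hnn1 : (0:ℝ) ≤ m + 1 := by linarith
        have hnn2 : (0:ℝ) ≤ ((π M + 1 : ℕ) : ℝ) ^ M := by positivity
        have hnn3 : (0:ℝ) ≤ (6 * m ^ α + 2) ^ M := by
          have : (0:ℝ) < m ^ α := Real.rpow_pos_of_pos hm0 α
          positivity
        have h23 : (0:ℝ) ≤ 2 ^ M * ((Cp + 1) * m ^ k) ^ M := by positivity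
        refine mul_le_mul (mul_le_mul step2 t2 hnn2 (by positivity)) t3 hnn3 h23
      have t5 : 2 ^ M * ((Cp + 1) * m ^ k) ^ M * (8 * m ^ a) ^ M = (E * m ^ b) ^ M := by
        rw [← mul_pow, ← mul_pow, hE_def, hb_def]
        ring
      linarith
    have hlogm : Real.logb 2 m ≤ m ^ h / (h * Real.log 2) := by
      have h1 : Real.log (m ^ h) = h * Real.log m := Real.log_rpow hm0 h
      have h2 : Real.log (m ^ h) ≤ m ^ h - 1 :=
        (Real.log_le_sub_one_of_pos (Real.rpow_pos_of_pos hm0 h)).trans (by linarith)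
      have h3 : Real.log m ≤ m ^ h / h := by
        rw [le_div_iff₀ hh, mul_comm]
        rw [h1] at h2; linarith
      rw [Real.logb, div_le_iff₀ hlog2] at *
      calc Real.log m ≤ m ^ h / h := h3
        _ = m ^ h / (h * Real.log 2) * Real.log 2 := by field_simp
    have hm1h : m * m ^ h = m ^ ((1:ℝ) + h) := by
      rw [Real.rpow_add hm0, Real.rpow_one]
    have hmle : m ≤ m ^ ((1:ℝ) + h) := by
      calc m = m ^ (1:ℝ) := (Real.rpow_one m).symm
        _ ≤ m ^ ((1:ℝ) + h) := Real.rpow_le_rpow_of_exponent_le hm1 (by linarith)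
    have hlogbE : 0 < Real.logb 2 E := Real.logb_pos one_lt_two hE1
    have hL : (M : ℝ) * (Real.logb 2 E + (b : ℝ) * Real.logb 2 m) ≤ K * m ^ ((1:ℝ) + h) := by
      have hlogm0 : 0 ≤ Real.logb 2 m := Real.logb_nonneg one_lt_two hm1
      have p1 : m * Real.logb 2 E ≤ m ^ ((1:ℝ)+h) * Real.logb 2 E :=
        mul_le_mul_of_nonneg_right hmle hlogbE.le
      have p2 : m * ((b : ℝ) * Real.logb 2 m) ≤ (b : ℝ) / (h * Real.log 2) * m ^ ((1:ℝ)+h) := by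
        calc m * ((b : ℝ) * Real.logb 2 m) ≤ m * ((b : ℝ) * (m ^ h / (h * Real.log 2))) := by
              refine mul_le_mul_of_nonneg_left (mul_le_mul_of_nonneg_left hlogm (by positivity)) hm0.le
          _ = (b : ℝ) / (h * Real.log 2) * (m * m ^ h) := by ring
          _ = (b : ℝ) / (h * Real.log 2) * m ^ ((1:ℝ)+h) := by rw [hm1h]
      calc (M : ℝ) * (Real.logb 2 E + (b : ℝ) * Real.logb 2 m)
          = m * Real.logb 2 E + m * ((b : ℝ) * Real.logb 2 m) := by rw [← hm_def]; ring
        _ ≤ m ^ ((1:ℝ)+h) * Real.logb 2 E + (b : ℝ) / (h * Real.log 2) * m ^ ((1:ℝ)+h) :=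
            add_le_add p1 p2
        _ = K * m ^ ((1:ℝ) + h) := by rw [hK_def]; ring
    have hmh_bound : m ^ ((1:ℝ) + h) ≤ 2 ^ ((1:ℝ)+h) * (6*β) ^ (1/γ) * ε ^ (-(1/γ)) := by
      have hm2x : m ≤ 2 * x := by
        have hc1 : (M : ℝ) < x + 1 := Nat.ceil_lt_add_one (by linarith)
        rw [hm_def]; linarith
      calc m ^ ((1:ℝ)+h) ≤ (2 * x) ^ ((1:ℝ)+h) :=
            Real.rpow_le_rpow hm0.le hm2x (by linarith)
        _ = 2 ^ ((1:ℝ)+h) * x ^ ((1:ℝ)+h) :=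
            Real.mul_rpow zero_le_two (by linarith)
        _ = 2 ^ ((1:ℝ)+h) * ((6*β)^(1/γ) * ε ^ (-(1/γ))) := by
            congr 1
            rw [hx_def, ← Real.rpow_mul hqpos.le, hexp, Real.div_rpow (by linarith) hε0.le,
              div_eq_mul_inv, ← Real.rpow_neg hε0.le]
        _ = 2 ^ ((1:ℝ)+h) * (6*β) ^ (1/γ) * ε ^ (-(1/γ)) := by ring
    have hfinal : (M : ℝ) * (Real.logb 2 E + (b : ℝ) * Real.logb 2 m) ≤ c * ε ^ (-(1/γ)) := by
      calc (M : ℝ) * (Real.logb 2 E + (b : ℝ) * Real.logb 2 m) ≤ K * m ^ ((1:ℝ) + h) := hL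
        _ ≤ K * (2 ^ ((1:ℝ)+h) * (6*β) ^ (1/γ) * ε ^ (-(1/γ))) :=
            mul_le_mul_of_nonneg_left hmh_bound hK.le
        _ = c * ε ^ (-(1/γ)) := by rw [hc_def]; ring
    have hrw : (E * m ^ b) ^ M = (2:ℝ) ^ ((M : ℝ) * (Real.logb 2 E + (b : ℝ) * Real.logb 2 m)) := by
      have h1 : (E * m ^ b) = (2:ℝ) ^ (Real.logb 2 (E * m ^ b)) :=
        (Real.rpow_logb two_pos (by norm_num) hEm).symm
      have h2 : Real.logb 2 (E * m ^ b) = Real.logb 2 E + (b : ℝ) * Real.logb 2 m := by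
        rw [Real.logb_mul (by positivity) (by positivity), Real.logb_pow]
      calc (E * m ^ b) ^ M = ((2:ℝ) ^ (Real.logb 2 (E * m ^ b))) ^ M := by rw [← h1]
        _ = (2:ℝ) ^ (Real.logb 2 (E * m ^ b) * (M:ℝ)) := by
            rw [← Real.rpow_natCast ((2:ℝ) ^ (Real.logb 2 (E * m ^ b))) M,
              ← Real.rpow_mul two_pos.le]
        _ = (2:ℝ) ^ ((M : ℝ) * (Real.logb 2 E + (b : ℝ) * Real.logb 2 m)) := by
            rw [h2]; ring_nf
    calc (X.card : ℝ) ≤ (E * m ^ b) ^ M := hstep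
      _ = (2:ℝ) ^ ((M : ℝ) * (Real.logb 2 E + (b : ℝ) * Real.logb 2 m)) := hrw
      _ ≤ (2:ℝ) ^ (c * ε ^ (-(1/γ))) := Real.rpow_le_rpow_of_exponent_le one_le_two hfinal

/-- In a Hilbert space, for a dictionary `(φ_i)` and `π` of polynomial
growth, the ball `A^α(𝔽,Σ^π,β)` of the approximation space (functions of norm ≤ β approximated
at rate `M^{−α}` with constant β by `Σ^π_M`) has encoding speed at least `α`. -/
theorem encodingSpeed_approximation_ball_ge {F : Type*} [NormedAddCommGroup F]
    [InnerProductSpace ℝ F] [CompleteSpace F]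
    (φ : ℕ → F) (π : ℕ → ℕ)
    (hπ : ∃ Cp : ℝ, 0 < Cp ∧ ∃ k : ℕ, ∀ M : ℕ, 1 ≤ M → (π M : ℝ) ≤ Cp * (M : ℝ) ^ k)
    (α β : ℝ) (hα : 0 < α) (hβ : 0 < β) :
    (α : EReal) ≤ encodingSpeed
      {f : F | ‖f‖ ≤ β ∧ ∀ M : ℕ, 1 ≤ M →
        (M : ℝ) ^ α * Metric.infDist f
          {g : F | ∃ I : Finset ℕ, I ⊆ Finset.range (π M) ∧ I.card ≤ M ∧
            ∃ co : ℕ → ℝ, g = ∑ i ∈ I, co i • φ i} ≤ β} := by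
  classical
  set CC : Set F := {f : F | ‖f‖ ≤ β ∧ ∀ M : ℕ, 1 ≤ M →
      (M : ℝ) ^ α * Metric.infDist f
        {g : F | ∃ I : Finset ℕ, I ⊆ Finset.range (π M) ∧ I.card ≤ M ∧
          ∃ co : ℕ → ℝ, g = ∑ i ∈ I, co i • φ i} ≤ β} with hCC
  rw [encodingSpeed]
  by_contra hcon
  push_neg at hcon
  have h0 : (0 : EReal) ≤ sSup ({(0 : EReal)} ∪ {x : EReal | ∃ γ : ℝ, 0 < γ ∧ x = (γ : EReal) ∧
      ∃ c : ℝ, 0 < c ∧ ∀ᶠ ε : ℝ in nhdsWithin 0 (Set.Ioi 0), ∃ X : Finset F, ↑X ⊆ CC ∧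
      (CC ⊆ ⋃ y ∈ X, Metric.closedBall y ε) ∧
      (X.card : ℝ) ≤ 2 ^ (c * ε ^ (-(1 / γ)))}) :=
    le_sSup (Set.mem_union_left _ (Set.mem_singleton _))
  obtain ⟨x, hx1, hx2⟩ := exists_between hcon
  have hx0 : (0 : EReal) < x := lt_of_le_of_lt h0 hx1
  have hxt : x ≠ ⊤ := (hx2.trans (EReal.coe_lt_top α)).ne
  have hxb : x ≠ ⊥ := (lt_of_le_of_lt bot_le hx0).ne'
  set γ : ℝ := x.toReal with hγdef
  have hxγ : (γ : EReal) = x := EReal.coe_toReal hxt hxb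
  have hγpos : 0 < γ := by
    have : ((0 : ℝ) : EReal) < (γ : EReal) := by rw [hxγ]; exact_mod_cast hx0
    exact_mod_cast this
  have hγα : γ < α := by
    have : (γ : EReal) < (α : EReal) := by rw [hxγ]; exact hx2
    exact_mod_cast this
  obtain ⟨c, hc, hev⟩ := main_thm φ π hπ α β hα hβ γ hγpos hγα
  have hxmem : x ∈ ({(0 : EReal)} ∪ {x : EReal | ∃ γ : ℝ, 0 < γ ∧ x = (γ : EReal) ∧
      ∃ c : ℝ, 0 < c ∧ ∀ᶠ ε : ℝ in nhdsWithin 0 (Set.Ioi 0), ∃ X : Finset F, ↑X ⊆ CC ∧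
      (CC ⊆ ⋃ y ∈ X, Metric.closedBall y ε) ∧
      (X.card : ℝ) ≤ 2 ^ (c * ε ^ (-(1 / γ)))}) :=
    Set.mem_union_right _ ⟨γ, hγpos, hxγ.symm, c, hc, hev⟩
  exact absurd (le_sSup hxmem) (not_le.2 hx1)
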